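/- Let K ⊴ N ⊴ G be finite groups with N = K·Z(N), Z(K) = K ∩ Z(N), O_p(N) ≤ Z(N), and both K and N normal in G. Then there is a bijection between the set of G-orbits of p-chains of N starting with O_p(N) and the set of G-orbits of p-chains of K starting with O_p(K); this bijection preserves the lengths of chains and the G-stabilizers of corresponding chains are equal. -/

import Mathlib

/-- The `p`-core `O_p(G)`: the join of all normal `p`-subgroups of `G`
(for a finite group this is the largest normal `p`-subgroup). -/
def pCore (p : ℕ) (G : Type*) [Group G] : Subgroup G :=
  ⨆ K ∈ {K : Subgroup G | K.Normal ∧ IsPGroup p K}, K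

/-- Conjugate of a subgroup by a group element. -/
def conjSub {G : Type*} [Group G] (g : G) (H : Subgroup G) : Subgroup G :=
  H.map (MulAut.conj g).toMonoidHom

/-- `C` is (the set of terms of) a `p`-chain of the subgroup `B` of `G`
starting with `U`: a finite, totally ordered set of `p`-subgroups of `B`,
all containing the first term `U`. -/
def IsPChainSet (p : ℕ) {G : Type*} [Group G] (B U : Subgroup G)
    (C : Set (Subgroup G)) : Prop :=
  C.Finite ∧ U ∈ C ∧ (∀ P ∈ C, IsPGroup p P ∧ U ≤ P ∧ P ≤ B) ∧ IsChain (· ≤ ·) C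

namespace Stmt13Aux

variable {G : Type*} [Group G]

lemma mem_conjSub {g x : G} {H : Subgroup G} :
    x ∈ conjSub g H ↔ ∃ h ∈ H, g * h * g⁻¹ = x := by
  simp [conjSub, Subgroup.mem_map]

lemma conjSub_conjSub (g₁ g₂ : G) (H : Subgroup G) :
    conjSub g₁ (conjSub g₂ H) = conjSub (g₁ * g₂) H := by
  ext x
  simp only [mem_conjSub]
  constructor
  · rintro ⟨y, ⟨h, hh, rfl⟩, rfl⟩
    exact ⟨h, hh, by group⟩
  · rintro ⟨h, hh, rfl⟩
    exact ⟨g₂ * h * g₂⁻¹, ⟨h, hh, rfl⟩, by group⟩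

lemma conjSub_one (H : Subgroup G) : conjSub 1 H = H := by
  ext x; simp [mem_conjSub]

lemma conjSub_mono (g : G) {H T : Subgroup G} (h : H ≤ T) : conjSub g H ≤ conjSub g T :=
  Subgroup.map_mono h

lemma conjSub_le_iff {g : G} {H T : Subgroup G} : conjSub g H ≤ T ↔ H ≤ conjSub g⁻¹ T := by
  constructor
  · intro h
    have := conjSub_mono g⁻¹ h
    rwa [conjSub_conjSub, inv_mul_cancel, conjSub_one] at this
  · intro h
    have := conjSub_mono g h
    rwa [conjSub_conjSub, mul_inv_cancel, conjSub_one] at this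

lemma conjSub_sup (g : G) (H T : Subgroup G) :
    conjSub g (H ⊔ T) = conjSub g H ⊔ conjSub g T :=
  Subgroup.map_sup H T _

lemma conjSub_inf (g : G) (H T : Subgroup G) :
    conjSub g (H ⊓ T) = conjSub g H ⊓ conjSub g T :=
  Subgroup.map_inf H T _ (MulAut.conj g).injective

lemma conjSub_of_normal (H : Subgroup G) [hn : H.Normal] (g : G) : conjSub g H = H := by
  ext x
  rw [mem_conjSub]
  constructor
  · rintro ⟨h, hh, rfl⟩
    exact hn.conj_mem h hh g
  · intro hx
    exact ⟨g⁻¹ * x * g, by simpa using hn.conj_mem x hx g⁻¹, by group⟩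

variable {p : ℕ} [Fact p.Prime]

lemma le_pCoreMap {A H : Subgroup G} (hHA : H ≤ A) (hp : IsPGroup p H)
    (hnorm : ∀ a ∈ A, ∀ x ∈ H, a * x * a⁻¹ ∈ H) :
    H ≤ (pCore p ↥A).map A.subtype := by
  have hrange : H ≤ A.subtype.range := by rwa [Subgroup.range_subtype]
  have hmapcomap : (H.comap A.subtype).map A.subtype = H := Subgroup.map_comap_eq_self hrange
  have hN : (H.comap A.subtype).Normal := by
    constructor
    intro l hl a
    have : (a : G) * l * (a : G)⁻¹ ∈ H := hnorm a a.2 l hl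
    rw [Subgroup.mem_comap]; simpa using this
  have hpg : IsPGroup p (H.comap A.subtype) := hp.comap_of_injective A.subtype A.subtype_injective
  have hle : H.comap A.subtype ≤ pCore p ↥A := by
    rw [pCore]
    exact le_iSup₂_of_le (H.comap A.subtype) ⟨hN, hpg⟩ le_rfl
  calc H = (H.comap A.subtype).map A.subtype := hmapcomap.symm
    _ ≤ (pCore p ↥A).map A.subtype := Subgroup.map_mono hle

lemma pCoreMap_le {A T : Subgroup G}
    (h : ∀ H : Subgroup G, H ≤ A → IsPGroup p H →
      (∀ a ∈ A, ∀ x ∈ H, a * x * a⁻¹ ∈ H) → H ≤ T) :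
    (pCore p ↥A).map A.subtype ≤ T := by
  rw [Subgroup.map_le_iff_le_comap, pCore]
  refine iSup₂_le fun L hL => ?_
  rw [← Subgroup.map_le_iff_le_comap]
  refine h (L.map A.subtype) (Subgroup.map_subtype_le L) (hL.2.map A.subtype) ?_
  rintro a ha x ⟨l, hl, rfl⟩
  refine ⟨(⟨a, ha⟩ : ↥A) * l * (⟨a, ha⟩ : ↥A)⁻¹, hL.1.conj_mem l hl _, rfl⟩

lemma centerMap_comm {A : Subgroup G} {z n : G}
    (hz : z ∈ (Subgroup.center ↥A).map A.subtype) (hn : n ∈ A) : z * n = n * z := by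
  obtain ⟨c, hc, rfl⟩ := hz
  have := (Subgroup.mem_center_iff.mp hc ⟨n, hn⟩)
  exact congrArg Subtype.val this.symm

lemma le_O_of_central {N H : Subgroup G}
    (hHZ : H ≤ (Subgroup.center ↥N).map N.subtype) (hp : IsPGroup p H) :
    H ≤ (pCore p ↥N).map N.subtype := by
  refine le_pCoreMap (hHZ.trans (Subgroup.map_subtype_le _)) hp ?_
  intro a ha x hx
  have hc : x * a = a * x := centerMap_comm (hHZ hx) ha
  have : a * x * a⁻¹ = x := by rw [← hc, mul_inv_cancel_right]
  rwa [this]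

lemma mem_O_of_central_pow {N : Subgroup G} {x : G}
    (hx : x ∈ (Subgroup.center ↥N).map N.subtype) (k : ℕ) (hk : x ^ p ^ k = 1) :
    x ∈ (pCore p ↥N).map N.subtype := by
  have hpg : IsPGroup p (Subgroup.zpowers x) := by
    intro y
    obtain ⟨n, hn⟩ := Subgroup.mem_zpowers_iff.mp y.2
    refine ⟨k, ?_⟩
    have : (y : G) ^ p ^ k = 1 := by
      rw [← hn, ← zpow_natCast, ← zpow_mul, mul_comm, zpow_mul, zpow_natCast, hk, one_zpow]
    exact Subtype.ext (by simpa using this)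
  exact le_O_of_central (Subgroup.zpowers_le.mpr hx) hpg (Subgroup.mem_zpowers x)

lemma O_pgroup {N : Subgroup G}
    (hOp : (pCore p ↥N).map N.subtype ≤ (Subgroup.center ↥N).map N.subtype) :
    IsPGroup p ((pCore p ↥N).map N.subtype) := by
  rintro ⟨x, hx⟩
  obtain ⟨y, hy, rfl⟩ := hx
  suffices h : y ∈ Subgroup.center ↥N ∧ ∃ k, y ^ p ^ k = 1 by
    obtain ⟨-, k, hk⟩ := h
    refine ⟨k, Subtype.ext ?_⟩
    have : ((y : G)) ^ p ^ k = 1 := by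
      have := congrArg (Subtype.val : ↥N → G) hk
      simpa using this
    simpa using this
  have hre : pCore p ↥N
      = ⨆ (L : {L : Subgroup ↥N // L ∈ {K : Subgroup ↥N | K.Normal ∧ IsPGroup p K}}), (L : Subgroup ↥N) := by
    rw [pCore, iSup_subtype']
  rw [hre] at hy
  refine Subgroup.iSup_induction _ (C := fun y => y ∈ Subgroup.center ↥N ∧ ∃ k, y ^ p ^ k = 1)
    hy ?_ ⟨Subgroup.one_mem _, 0, by simp⟩ ?_
  · rintro L y hyL
    have hLle : (L : Subgroup ↥N) ≤ pCore p ↥N := by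
      rw [hre]; exact le_iSup (fun (L : {L : Subgroup ↥N // L ∈ {K : Subgroup ↥N | K.Normal ∧ IsPGroup p K}}) =>
        (L : Subgroup ↥N)) L
    have hyZ : (y : G) ∈ (Subgroup.center ↥N).map N.subtype :=
      hOp (Subgroup.mem_map_of_mem _ (hLle hyL))
    obtain ⟨c, hc, hcy⟩ := hyZ
    have hcy' : c = y := N.subtype_injective hcy
    refine ⟨hcy' ▸ hc, ?_⟩
    obtain ⟨k, hk⟩ := L.2.2 ⟨y, hyL⟩
    exact ⟨k, by have := congrArg (Subtype.val : _ → ↥N) hk; simpa using this⟩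
  · rintro a b ⟨hac, k, hak⟩ ⟨hbc, l, hbl⟩
    refine ⟨Subgroup.mul_mem _ hac hbc, k + l, ?_⟩
    have hcomm : Commute a b := (Subgroup.mem_center_iff.mp hac b).symm
    rw [hcomm.mul_pow, pow_add, pow_mul, hak, one_pow, one_mul, mul_comm (p ^ k),
      pow_mul, hbl, one_pow]

lemma conjSub_pCoreMap {N : Subgroup G} [N.Normal] (g : G) :
    conjSub g ((pCore p ↥N).map N.subtype) = (pCore p ↥N).map N.subtype := by
  have key : ∀ g : G, conjSub g ((pCore p ↥N).map N.subtype) ≤ (pCore p ↥N).map N.subtype := by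
    intro g
    rw [conjSub_le_iff]
    refine pCoreMap_le ?_
    intro H hHN hHp hHnorm
    rw [← conjSub_le_iff]
    refine le_pCoreMap ?_ ?_ ?_
    · calc conjSub g H ≤ conjSub g N := conjSub_mono g hHN
        _ = N := conjSub_of_normal N g
    · exact hHp.map _
    · rintro a ha x hx
      obtain ⟨h, hh, rfl⟩ := mem_conjSub.mp hx
      have hin : g⁻¹ * a * g ∈ N := by
        have := Subgroup.Normal.conj_mem ‹N.Normal› a ha g⁻¹
        rwa [inv_inv] at this
      refine mem_conjSub.mpr ⟨(g⁻¹ * a * g) * h * (g⁻¹ * a * g)⁻¹,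
        hHnorm _ hin h hh, by group⟩
  refine le_antisymm (key g) ?_
  have := conjSub_mono g (key g⁻¹)
  rwa [conjSub_conjSub, mul_inv_cancel, conjSub_one] at this

lemma Ok_eq {K N : Subgroup G} [K.Normal] [N.Normal] (hKN : K ≤ N)
    (hprod : K ⊔ (Subgroup.center ↥N).map N.subtype = N)
    (hOp : (pCore p ↥N).map N.subtype ≤ (Subgroup.center ↥N).map N.subtype) :
    (pCore p ↥K).map K.subtype = (pCore p ↥N).map N.subtype ⊓ K := by
  refine le_antisymm ?_ ?_
  · refine pCoreMap_le ?_
    intro H hHK hHp hHnorm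
    refine le_inf ?_ hHK
    refine le_pCoreMap (hHK.trans hKN) hHp ?_
    intro a ha x hx
    have haKZ : a ∈ (↑(K ⊔ (Subgroup.center ↥N).map N.subtype) : Set G) := by
      rw [hprod]; exact ha
    rw [Subgroup.normal_mul] at haKZ
    obtain ⟨k, hk, z, hz, rfl⟩ := haKZ
    have hzx : z * x * z⁻¹ = x := by
      rw [centerMap_comm hz (hKN (hHK hx)), mul_inv_cancel_right]
    have : k * z * x * (k * z)⁻¹ = k * (z * x * z⁻¹) * k⁻¹ := by group
    rw [mul_assoc] at this ⊢
    rw [this, hzx]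
    exact hHnorm k hk x hx
  · refine le_pCoreMap inf_le_right ((O_pgroup hOp).to_le inf_le_left) ?_
    intro a ha x hx
    have hc : x * a = a * x := centerMap_comm (hOp hx.1) (hKN ha)
    have : a * x * a⁻¹ = x := by rw [← hc, mul_inv_cancel_right]
    rwa [this]

lemma P_decomp {K N : Subgroup G} [Finite G] [K.Normal] [N.Normal] (hKN : K ≤ N)
    (hprod : K ⊔ (Subgroup.center ↥N).map N.subtype = N)
    {P : Subgroup G} (hPp : IsPGroup p P)
    (hOP : (pCore p ↥N).map N.subtype ≤ P) (hPN : P ≤ N) :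
    (pCore p ↥N).map N.subtype ⊔ (P ⊓ K) = P := by
  refine le_antisymm (sup_le hOP inf_le_left) ?_
  intro x hx
  have hxN : x ∈ (↑(K ⊔ (Subgroup.center ↥N).map N.subtype) : Set G) := by
    rw [hprod]; exact hPN hx
  rw [Subgroup.normal_mul] at hxN
  obtain ⟨kk, hkk, z, hz, hkz⟩ := hxN
  have hp' : p.Prime := Fact.out
  have hn₀ : orderOf z ≠ 0 := (orderOf_pos z).ne'
  obtain ⟨a, m, hfact, hpm⟩ : ∃ a m, p ^ a * m = orderOf z ∧ ¬ p ∣ m :=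
    ⟨(orderOf z).factorization p, orderOf z / p ^ (orderOf z).factorization p,
      Nat.ordProj_mul_ordCompl_eq_self (orderOf z) p, Nat.not_dvd_ordCompl hp' hn₀⟩
  have hc1 : Nat.Coprime p m := (Nat.Prime.coprime_iff_not_dvd hp').mpr hpm
  obtain ⟨s, t, hst⟩ := Nat.Coprime.isCoprime (Nat.Coprime.pow_left a hc1)
  have hzn : z ^ ((orderOf z : ℕ) : ℤ) = 1 := by
    rw [zpow_natCast, pow_orderOf_eq_one]
  have hfactZ : ((p : ℤ)) ^ a * (m : ℤ) = ((orderOf z : ℕ) : ℤ) := by exact_mod_cast hfact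
  obtain ⟨u, hudef⟩ : ∃ u, u = z ^ (t * (m : ℤ)) := ⟨_, rfl⟩
  obtain ⟨v, hvdef⟩ : ∃ v, v = z ^ (s * ((p ^ a : ℕ) : ℤ)) := ⟨_, rfl⟩
  have huv : u * v = z := by
    rw [hudef, hvdef, ← zpow_add, add_comm, hst, zpow_one]
  have hu_pow : u ^ p ^ a = 1 := by
    rw [hudef, ← zpow_natCast, ← zpow_mul]
    have harith : t * (m : ℤ) * ((p ^ a : ℕ) : ℤ) = ((orderOf z : ℕ) : ℤ) * t := by
      push_cast
      rw [← hfactZ]; ring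
    rw [harith, zpow_mul, hzn, one_zpow]
  have hu_Z : u ∈ (Subgroup.center ↥N).map N.subtype := by
    rw [hudef]; exact Subgroup.zpow_mem _ hz _
  have hu_O : u ∈ (pCore p ↥N).map N.subtype := mem_O_of_central_pow hu_Z a hu_pow
  have hv_Z : v ∈ (Subgroup.center ↥N).map N.subtype := by
    rw [hvdef]; exact Subgroup.zpow_mem _ hz _
  have hv_m : v ^ (m : ℤ) = 1 := by
    rw [hvdef, ← zpow_mul]
    have harith : s * ((p ^ a : ℕ) : ℤ) * (m : ℤ) = ((orderOf z : ℕ) : ℤ) * s := by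
      push_cast
      rw [← hfactZ]; ring
    rw [harith, zpow_mul, hzn, one_zpow]
  have hy_P : x * u⁻¹ ∈ P := mul_mem hx (inv_mem (hOP hu_O))
  have hzu : z * u⁻¹ = v := by
    rw [← huv]
    have hcomm : u * v = v * u := by
      rw [hudef, hvdef, ← zpow_add, ← zpow_add, add_comm]
    rw [hcomm, mul_inv_cancel_right]
  have hy_eq : x * u⁻¹ = kk * v := by rw [← hkz, mul_assoc, hzu]
  obtain ⟨b, hb⟩ := hPp ⟨x * u⁻¹, hy_P⟩
  have hb' : (x * u⁻¹) ^ p ^ b = 1 := by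
    have := congrArg (Subtype.val : ↥P → G) hb
    simpa using this
  have hC : Commute kk v := (centerMap_comm hv_Z (hKN hkk)).symm
  have hkb : kk ^ p ^ b * v ^ p ^ b = 1 := by
    rw [← hC.mul_pow, ← hy_eq, hb']
  have hvK_pow : v ^ p ^ b ∈ K := by
    have h1 : (kk ^ p ^ b)⁻¹ = v ^ p ^ b := inv_eq_of_mul_eq_one_right hkb
    rw [← h1]; exact inv_mem (pow_mem hkk _)
  obtain ⟨e, f, hef⟩ := Nat.Coprime.isCoprime (Nat.Coprime.pow_right b hc1.symm)
  have hvK : v ∈ K := by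
    have hvsplit : v = (v ^ (m : ℤ)) ^ e * (v ^ ((p ^ b : ℕ) : ℤ)) ^ f := by
      have hone : (m : ℤ) * e + ((p ^ b : ℕ) : ℤ) * f = 1 := by
        rw [mul_comm (m : ℤ) e, mul_comm (((p ^ b : ℕ) : ℤ)) f]; exact hef
      rw [← zpow_mul, ← zpow_mul, ← zpow_add, hone, zpow_one]
    rw [hvsplit, hv_m, one_zpow, one_mul]
    refine Subgroup.zpow_mem _ ?_ f
    rw [zpow_natCast]; exact hvK_pow
  have hyK : x * u⁻¹ ∈ P ⊓ K := ⟨hy_P, by rw [hy_eq]; exact mul_mem hkk hvK⟩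
  have hxeq : (x * u⁻¹) * u = x := inv_mul_cancel_right x u
  exact hxeq ▸ mul_mem ((le_sup_right : P ⊓ K ≤ _) hyK)
    ((le_sup_left : (pCore p ↥N).map N.subtype ≤ _) hu_O)

lemma sup_inf_eq' {K O' Q : Subgroup G} [O'.Normal] (hQK : Q ≤ K) (hOkQ : O' ⊓ K ≤ Q) :
    (O' ⊔ Q) ⊓ K = Q := by
  refine le_antisymm ?_ (le_inf le_sup_right hQK)
  rintro x ⟨hx1, hx2⟩
  have hxm : x ∈ (↑(O' ⊔ Q) : Set G) := hx1
  rw [Subgroup.normal_mul] at hxm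
  obtain ⟨u, hu, q, hq, rfl⟩ := hxm
  have huK : u ∈ K := by
    have : u = (u * q) * q⁻¹ := by group
    rw [this]; exact mul_mem hx2 (inv_mem (hQK hq))
  exact mul_mem (hOkQ ⟨hu, huK⟩) hq

end Stmt13Aux

theorem stmt_13 (p : ℕ) [Fact p.Prime] {G : Type*} [Group G] [Finite G]
    (K N : Subgroup G) [K.Normal] [N.Normal] (hKN : K ≤ N)
    (hprod : K ⊔ (Subgroup.center ↥N).map N.subtype = N)
    (hZK : (Subgroup.center ↥K).map K.subtype
        = K ⊓ (Subgroup.center ↥N).map N.subtype)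
    (hOp : (pCore p ↥N).map N.subtype ≤ (Subgroup.center ↥N).map N.subtype) :
    ∃ Φ : {C : Set (Subgroup G) // IsPChainSet p N ((pCore p ↥N).map N.subtype) C} →
          {C : Set (Subgroup G) // IsPChainSet p K ((pCore p ↥K).map K.subtype) C},
      -- Φ induces a bijection between the sets of G-orbits of chains
      (∀ σ τ, (∃ g : G, conjSub g '' σ.val = τ.val) ↔
        (∃ g : G, conjSub g '' (Φ σ).val = (Φ τ).val)) ∧
      (∀ τ' : {C : Set (Subgroup G) // IsPChainSet p K ((pCore p ↥K).map K.subtype) C},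
        ∃ σ, ∃ g : G, conjSub g '' (Φ σ).val = τ'.val) ∧
      -- lengths are preserved
      (∀ σ, (Φ σ).val.ncard = σ.val.ncard) ∧
      -- the G-stabilizers of corresponding chains are equal
      (∀ σ (g : G), (∀ P ∈ σ.val, conjSub g P = P) ↔
        (∀ P ∈ (Φ σ).val, conjSub g P = P)) := by
  classical
  set Om := (pCore p ↥N).map N.subtype with hOm
  set Okm := (pCore p ↥K).map K.subtype with hOkm
  have hON : Om ≤ N := Subgroup.map_subtype_le _
  have hOpg : IsPGroup p Om := Stmt13Aux.O_pgroup hOp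
  have hconjO : ∀ g : G, conjSub g Om = Om := fun g => Stmt13Aux.conjSub_pCoreMap g
  haveI hOnorm : Om.Normal := ⟨fun x hx g => by
    have : g * x * g⁻¹ ∈ conjSub g Om := Stmt13Aux.mem_conjSub.mpr ⟨x, hx, rfl⟩
    rwa [hconjO g] at this⟩
  have hOkeq : Okm = Om ⊓ K := Stmt13Aux.Ok_eq hKN hprod hOp
  have hkey : ∀ P : Subgroup G, IsPGroup p P → Om ≤ P → P ≤ N → Om ⊔ (P ⊓ K) = P :=
    fun P h1 h2 h3 => Stmt13Aux.P_decomp hKN hprod h1 h2 h3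
  have hQrec : ∀ Q : Subgroup G, Q ≤ K → Okm ≤ Q → (Om ⊔ Q) ⊓ K = Q :=
    fun Q h1 h2 => Stmt13Aux.sup_inf_eq' h1 (by rw [← hOkeq]; exact h2)
  have hconjK : ∀ g : G, conjSub g K = K := fun g => Stmt13Aux.conjSub_of_normal K g
  have hΦmem : ∀ C, IsPChainSet p N Om C → IsPChainSet p K Okm ((fun P => P ⊓ K) '' C) := by
    rintro C ⟨hfin, hOC, hall, hch⟩
    refine ⟨hfin.image _, ⟨Om, hOC, hOkeq.symm⟩, ?_, ?_⟩
    · rintro Q ⟨P, hP, rfl⟩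
      obtain ⟨h1, h2, h3⟩ := hall P hP
      exact ⟨h1.to_le inf_le_left, by rw [hOkeq]; exact inf_le_inf_right K h2, inf_le_right⟩
    · exact hch.image_of_map_rel _ _ _ (fun x y h => inf_le_inf_right K h)
  have hrecon : ∀ C, IsPChainSet p N Om C →
      (fun Q => Om ⊔ Q) '' ((fun P => P ⊓ K) '' C) = C := by
    rintro C ⟨hfin, hOC, hall, hch⟩
    rw [Set.image_image]
    have h : ∀ P ∈ C, Om ⊔ (P ⊓ K) = P := fun P hP =>
      hkey P (hall P hP).1 (hall P hP).2.1 (hall P hP).2.2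
    calc (fun P => Om ⊔ (P ⊓ K)) '' C = (fun P => P) '' C := Set.image_congr h
      _ = C := Set.image_id' C
  have hΨmem : ∀ C, IsPChainSet p K Okm C →
      IsPChainSet p N Om ((fun Q => Om ⊔ Q) '' C) := by
    rintro C ⟨hfin, hOC, hall, hch⟩
    refine ⟨hfin.image _, ⟨Okm, hOC, by rw [hOkeq]; exact sup_inf_self⟩, ?_, ?_⟩
    · rintro P ⟨Q, hQ, rfl⟩
      obtain ⟨h1, h2, h3⟩ := hall Q hQ
      exact ⟨IsPGroup.to_sup_of_normal_left hOpg h1, le_sup_left, sup_le hON (h3.trans hKN)⟩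
    · exact hch.image_of_map_rel _ _ _ (fun x y h => sup_le_sup_left h Om)
  have hΦΨ : ∀ C, IsPChainSet p K Okm C →
      (fun P => P ⊓ K) '' ((fun Q => Om ⊔ Q) '' C) = C := by
    rintro C ⟨hfin, hOC, hall, hch⟩
    rw [Set.image_image]
    have h : ∀ Q ∈ C, (Om ⊔ Q) ⊓ K = Q := fun Q hQ =>
      hQrec Q (hall Q hQ).2.2 (hall Q hQ).2.1
    calc (fun Q => (Om ⊔ Q) ⊓ K) '' C = (fun Q => Q) '' C := Set.image_congr h
      _ = C := Set.image_id' C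
  have hconj_toK : ∀ (g : G) (C : Set (Subgroup G)),
      conjSub g '' ((fun P => P ⊓ K) '' C) = (fun P => P ⊓ K) '' (conjSub g '' C) := by
    intro g C
    rw [Set.image_image, Set.image_image]
    exact Set.image_congr fun P _ => by
      show conjSub g (P ⊓ K) = conjSub g P ⊓ K
      rw [Stmt13Aux.conjSub_inf, hconjK]
  have hconj_toN : ∀ (g : G) (C : Set (Subgroup G)),
      conjSub g '' ((fun Q => Om ⊔ Q) '' C) = (fun Q => Om ⊔ Q) '' (conjSub g '' C) := by
    intro g C
    rw [Set.image_image, Set.image_image]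
    exact Set.image_congr fun Q _ => by
      show conjSub g (Om ⊔ Q) = Om ⊔ conjSub g Q
      rw [Stmt13Aux.conjSub_sup, hconjO]
  refine ⟨fun σ => ⟨(fun P => P ⊓ K) '' σ.1, hΦmem σ.1 σ.2⟩, ?_, ?_, ?_, ?_⟩
  · intro σ τ
    constructor
    · rintro ⟨g, hg⟩
      refine ⟨g, ?_⟩
      show conjSub g '' ((fun P => P ⊓ K) '' σ.1) = (fun P => P ⊓ K) '' τ.1
      rw [hconj_toK, hg]
    · rintro ⟨g, hg⟩
      refine ⟨g, ?_⟩
      have hg' : conjSub g '' ((fun P => P ⊓ K) '' σ.1) = (fun P => P ⊓ K) '' τ.1 := hg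
      calc conjSub g '' σ.1
          = conjSub g '' ((fun Q => Om ⊔ Q) '' ((fun P => P ⊓ K) '' σ.1)) := by
            rw [hrecon σ.1 σ.2]
        _ = (fun Q => Om ⊔ Q) '' (conjSub g '' ((fun P => P ⊓ K) '' σ.1)) := hconj_toN g _
        _ = (fun Q => Om ⊔ Q) '' ((fun P => P ⊓ K) '' τ.1) := by rw [hg']
        _ = τ.1 := hrecon τ.1 τ.2
  · intro τ'
    refine ⟨⟨(fun Q => Om ⊔ Q) '' τ'.1, hΨmem τ'.1 τ'.2⟩, 1, ?_⟩
    show conjSub (1 : G) '' ((fun P => P ⊓ K) '' ((fun Q => Om ⊔ Q) '' τ'.1)) = τ'.1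
    calc conjSub (1 : G) '' ((fun P => P ⊓ K) '' ((fun Q => Om ⊔ Q) '' τ'.1))
        = (fun P => P) '' ((fun P => P ⊓ K) '' ((fun Q => Om ⊔ Q) '' τ'.1)) :=
          Set.image_congr fun P _ => Stmt13Aux.conjSub_one P
      _ = (fun P => P ⊓ K) '' ((fun Q => Om ⊔ Q) '' τ'.1) := Set.image_id' _
      _ = τ'.1 := hΦΨ τ'.1 τ'.2
  · intro σ
    show ((fun P => P ⊓ K) '' σ.1).ncard = σ.1.ncard
    refine Set.ncard_image_of_injOn ?_
    intro P₁ h₁ P₂ h₂ heq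
    obtain ⟨hfin, hOC, hall, hch⟩ := σ.2
    have heq' : P₁ ⊓ K = P₂ ⊓ K := heq
    have e₁ := hkey P₁ (hall P₁ h₁).1 (hall P₁ h₁).2.1 (hall P₁ h₁).2.2
    have e₂ := hkey P₂ (hall P₂ h₂).1 (hall P₂ h₂).2.1 (hall P₂ h₂).2.2
    rw [← e₁, ← e₂, heq']
  · intro σ g
    obtain ⟨hfin, hOC, hall, hch⟩ := σ.2
    constructor
    · intro h Q hQ
      obtain ⟨P, hP, rfl⟩ := hQ
      show conjSub g (P ⊓ K) = P ⊓ K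
      rw [Stmt13Aux.conjSub_inf, hconjK, h P hP]
    · intro h P hP
      have e := hkey P (hall P hP).1 (hall P hP).2.1 (hall P hP).2.2
      have h2 : conjSub g (P ⊓ K) = P ⊓ K := h (P ⊓ K) ⟨P, hP, rfl⟩
      rw [← e, Stmt13Aux.conjSub_sup, hconjO, h2]
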